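/- For a real symmetric invertible d×d matrix M, the regularized Gaussian integral satisfies lim_{ε→0⁺} ∫_{ℝ^d} e^{(i/2)⟨Mz,z⟩} e^{-ε|z|²/2} dz = (2π)^{d/2} |det M|^{-1/2} e^{(iπ/4)·sgn(M)}, where sgn(M) is the number of positive eigenvalues minus the number of negative eigenvalues of M. -/

import Mathlib

open Matrix Complex MeasureTheory Real Filter


lemma sqrt_eq_exp_half_log {r : ℝ} (hr : 0 < r) : Real.sqrt r = Real.exp (Real.log r / 2) := by
  rw [Real.sqrt_eq_rpow, Real.rpow_def_of_pos hr]; ring_nf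

lemma fresnel_factor (a : ℝ) (ha : a ≠ 0) :
    ((2 * (π:ℂ) * Complex.I) / (a:ℂ)) ^ (1/2 : ℂ)
      = (Real.sqrt (2*π/|a|) : ℂ) * Complex.exp (Complex.I * π/4 * (Real.sign a)) := by
  have hπ : (0:ℝ) < 2 * π / |a| := by positivity
  have hI : Complex.I ≠ 0 := Complex.I_ne_zero
  rcases lt_or_gt_of_ne ha with hneg | hpos
  · have habs : |a| = -a := abs_of_neg hneg
    have hz : (2 * (π:ℂ) * Complex.I) / (a:ℂ) = ((2*π/|a| : ℝ) : ℂ) * (-Complex.I) := by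
      rw [habs]; push_cast
      field_simp
    rw [hz, Complex.cpow_def_of_ne_zero (by
        simp only [ne_eq, mul_eq_zero, Complex.ofReal_eq_zero, neg_eq_zero, Complex.I_ne_zero,
          or_false]
        exact ne_of_gt hπ),
      Complex.log_ofReal_mul hπ (neg_ne_zero.mpr hI), Complex.log_neg_I,
      Real.sign_of_neg hneg, sqrt_eq_exp_half_log hπ]
    rw [add_mul, Complex.exp_add, Complex.ofReal_exp, ← Complex.exp_add, ← Complex.exp_add]
    congr 1
    push_cast
    ring
  · have habs : |a| = a := abs_of_pos hpos
    have hz : (2 * (π:ℂ) * Complex.I) / (a:ℂ) = ((2*π/|a| : ℝ) : ℂ) * Complex.I := by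
      rw [habs]; push_cast; field_simp
    rw [hz, Complex.cpow_def_of_ne_zero (by
        simp only [ne_eq, mul_eq_zero, Complex.ofReal_eq_zero, Complex.I_ne_zero, or_false]
        exact ne_of_gt hπ),
      Complex.log_ofReal_mul hπ hI, Complex.log_I,
      Real.sign_of_pos hpos, sqrt_eq_exp_half_log hπ]
    rw [add_mul, Complex.exp_add, Complex.ofReal_exp, ← Complex.exp_add, ← Complex.exp_add]
    congr 1
    push_cast
    ring

variable {d : ℕ}

lemma quad_form (A U : Matrix (Fin d) (Fin d) ℝ) (y : Fin d → ℝ) :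
    (A *ᵥ (U *ᵥ y)) ⬝ᵥ (U *ᵥ y) = ((Uᵀ * A * U) *ᵥ y) ⬝ᵥ y := by
  rw [mulVec_mulVec, dotProduct_mulVec, ← mulVec_transpose, mulVec_mulVec]
  rw [mul_assoc]

lemma measure_preserving_unitary (U : Matrix (Fin d) (Fin d) ℝ)
    (hU : U ∈ Matrix.unitaryGroup (Fin d) ℝ) :
    MeasurePreserving (fun y : Fin d → ℝ => U *ᵥ y) volume volume := by
  have hdet : |U.det| = 1 := by
    have h1 : star U * U = 1 := (Matrix.mem_unitaryGroup_iff'.mp hU)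
    have := congrArg Matrix.det h1
    rw [Matrix.det_mul, Matrix.det_one, Matrix.star_eq_conjTranspose,
      Matrix.conjTranspose_eq_transpose_of_trivial, Matrix.det_transpose] at this
    nlinarith [abs_nonneg U.det, _root_.sq_abs U.det]
  have hdet' : LinearMap.det (Matrix.toLin' U) ≠ 0 := by
    rw [LinearMap.det_toLin']
    intro h; rw [h] at hdet; simp at hdet
  constructor
  · exact (Matrix.toLin' U).continuous_of_finiteDimensional.measurable
  · have := Real.map_linearMap_volume_pi_eq_smul_volume_pi hdet'
    simp only [LinearMap.det_toLin'] at this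
    have h2 : |U.det⁻¹| = 1 := by rw [abs_inv, hdet]; norm_num
    rw [show (fun y : Fin d → ℝ => U *ᵥ y) = ⇑(Matrix.toLin' U) by
      ext y; simp [Matrix.toLin'_apply], this, h2]
    simp

lemma re_b (ε l : ℝ) : ((((ε:ℂ) - Complex.I * (l:ℂ))/2)).re = ε/2 := by
  simp [Complex.div_re]

lemma key_integral (M : Matrix (Fin d) (Fin d) ℝ) (hM : M.IsHermitian) {ε : ℝ} (hε : 0 < ε) :
    (∫ z : Fin d → ℝ, Complex.exp ((Complex.I / 2) * ((M.mulVec z ⬝ᵥ z : ℝ))) *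
        (Real.exp (-(ε / 2) * (z ⬝ᵥ z)) : ℝ))
      = ∏ i, ((π:ℂ) / (((ε:ℂ) - Complex.I * (hM.eigenvalues i : ℝ))/2)) ^ ((1:ℂ)/2) := by
  set U : Matrix (Fin d) (Fin d) ℝ := (hM.eigenvectorUnitary : Matrix (Fin d) (Fin d) ℝ) with hUdef
  have hU : U ∈ Matrix.unitaryGroup (Fin d) ℝ := hM.eigenvectorUnitary.2
  have hUU : star U * U = 1 := Matrix.mem_unitaryGroup_iff'.mp hU
  have hUt : Uᵀ = star U := by
    rw [Matrix.star_eq_conjTranspose, Matrix.conjTranspose_eq_transpose_of_trivial]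
  -- diagonalization
  have hdiag : Uᵀ * M * U = Matrix.diagonal hM.eigenvalues := by
    rw [hUt, hUdef, ← Unitary.conjStarAlgAut_star_apply (S := ℝ),
      hM.conjStarAlgAut_star_eigenvectorUnitary, RCLike.ofReal_real_eq_id, Function.id_comp]
  -- measurable embedding
  have hinv : Invertible U := by
    refine Matrix.invertibleOfIsUnitDet U ?_
    have := congrArg Matrix.det hUU
    rw [Matrix.det_mul, Matrix.det_one] at this
    rw [mul_comm] at this
    exact IsUnit.of_mul_eq_one _ this
  let e : (Fin d → ℝ) ≃ₗ[ℝ] (Fin d → ℝ) := Matrix.toLinearEquiv' U hinv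
  have he : ⇑(e.toContinuousLinearEquiv.toHomeomorph.toMeasurableEquiv)
      = fun y => U *ᵥ y := by
    funext y
    show e.toContinuousLinearEquiv y = _
    rw [show (e.toContinuousLinearEquiv : (Fin d → ℝ) → (Fin d → ℝ)) = ⇑e from
      LinearEquiv.coe_toContinuousLinearEquiv' e]
    show (Matrix.toLin' U) y = _
    rw [Matrix.toLin'_apply]
  have mp : MeasurePreserving (⇑(e.toContinuousLinearEquiv.toHomeomorph.toMeasurableEquiv))
      volume volume := by
    rw [he]; exact measure_preserving_unitary U hU
  rw [← mp.integral_comp' (f := e.toContinuousLinearEquiv.toHomeomorph.toMeasurableEquiv)]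
  simp only [he]
  have hintegrand : ∀ y : Fin d → ℝ,
      Complex.exp ((Complex.I / 2) * ((M.mulVec (U *ᵥ y) ⬝ᵥ (U *ᵥ y) : ℝ))) *
        (Real.exp (-(ε / 2) * ((U *ᵥ y) ⬝ᵥ (U *ᵥ y))) : ℝ)
      = ∏ i, Complex.exp (-(((ε:ℂ) - Complex.I * (hM.eigenvalues i : ℝ))/2) * (y i : ℂ)^2) := by
    intro y
    have h1 : M.mulVec (U *ᵥ y) ⬝ᵥ (U *ᵥ y) = ∑ i, hM.eigenvalues i * (y i)^2 := by
      rw [quad_form, hdiag]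
      simp [dotProduct, Matrix.mulVec_diagonal, mul_comm, pow_two, mul_assoc]
    have h2 : (U *ᵥ y) ⬝ᵥ (U *ᵥ y) = ∑ i, (y i)^2 := by
      have := quad_form 1 U y
      rw [Matrix.one_mulVec] at this
      rw [this, mul_one, hUt, hUU]
      simp [dotProduct, pow_two]
    rw [h1, h2, ← Complex.exp_sum]
    rw [Complex.ofReal_exp, ← Complex.exp_add]
    congr 1
    push_cast
    rw [Finset.mul_sum, Finset.mul_sum, ← Finset.sum_add_distrib]
    exact Finset.sum_congr rfl fun i _ => by ring
  simp only [hintegrand]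
  rw [volume_pi, MeasureTheory.integral_fintype_prod_eq_prod (ι := Fin d) (E := fun _ : Fin d => ℝ)
    (f := fun i t => Complex.exp (-(((ε:ℂ) - Complex.I * (hM.eigenvalues i : ℝ))/2) * (t : ℂ)^2))]
  refine Finset.prod_congr rfl fun i _ => ?_
  rw [integral_gaussian_complex (by rw [re_b]; linarith)]


/-- Fresnel integral formula: for a real symmetric (Hermitian) invertible `d×d` matrix `M`,
`lim_{ε→0⁺} ∫ e^{(i/2)⟨Mz,z⟩} e^{-ε|z|²/2} dz = (2π)^{d/2} |det M|^{-1/2} e^{(iπ/4) sgn M}`,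
where `sgn M` is the number of positive eigenvalues minus the number of negative
eigenvalues of `M`. -/
theorem fresnel_integral (d : ℕ) (M : Matrix (Fin d) (Fin d) ℝ)
    (hM : M.IsHermitian) (hdet : M.det ≠ 0) :
    Tendsto
      (fun ε : ℝ => ∫ z : Fin d → ℝ,
        Complex.exp ((Complex.I / 2) * ((M.mulVec z ⬝ᵥ z : ℝ))) *
          (Real.exp (-(ε / 2) * (z ⬝ᵥ z)) : ℝ))
      (nhdsWithin 0 (Set.Ioi 0))
      (nhds (((2 * π) ^ ((d : ℝ) / 2) * (Real.sqrt |M.det|)⁻¹ : ℝ) *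
        Complex.exp ((Complex.I * π / 4) *
          ((((Finset.univ.filter fun i => 0 < hM.eigenvalues i).card : ℤ) -
            ((Finset.univ.filter fun i => hM.eigenvalues i < 0).card : ℤ) : ℤ) : ℂ)))) := by
  have hdetprod : M.det = ∏ i, hM.eigenvalues i := by
    simpa using hM.det_eq_prod_eigenvalues
  have hlam : ∀ i, hM.eigenvalues i ≠ 0 := by
    intro i hi
    apply hdet
    rw [hdetprod]
    exact Finset.prod_eq_zero (Finset.mem_univ i) hi
  set F : ℝ → ℂ := fun ε =>
    ∏ i, ((π:ℂ) / (((ε:ℂ) - Complex.I * (hM.eigenvalues i : ℝ))/2)) ^ ((1:ℂ)/2) with hF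
  -- value of the base at ε = 0
  have hbase0 : ∀ i, ((π:ℂ) / ((((0:ℝ):ℂ) - Complex.I * (hM.eigenvalues i : ℝ))/2))
      = 2 * (π:ℂ) * Complex.I / (hM.eigenvalues i : ℝ) := by
    intro i
    have hl : ((hM.eigenvalues i : ℝ) : ℂ) ≠ 0 := Complex.ofReal_ne_zero.mpr (hlam i)
    push_cast
    rw [div_eq_div_iff (by simp [Complex.I_ne_zero, hl]) hl]
    ring_nf
    rw [Complex.I_sq]
    ring
  -- continuity of F at 0
  have hcont : Tendsto F (nhds 0)
      (nhds (∏ i, ((π:ℂ) / ((((0:ℝ):ℂ) - Complex.I * (hM.eigenvalues i : ℝ))/2)) ^ ((1:ℂ)/2))) := by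
    apply tendsto_finset_prod
    intro i _
    have hgi : ContinuousAt
        (fun ε : ℝ => ((π:ℂ) / (((ε:ℂ) - Complex.I * (hM.eigenvalues i : ℝ))/2)) ^ ((1:ℂ)/2)) 0 := by
      refine ContinuousAt.cpow ?_ continuousAt_const ?_
      · apply ContinuousAt.div continuousAt_const
        · exact ((Complex.continuous_ofReal.continuousAt).sub continuousAt_const).div_const 2
        · intro h
          rw [div_eq_zero_iff, sub_eq_zero] at h
          rcases h with h | h
          · exact hlam i (by
              have := congrArg Complex.im h.symm
              simpa using this)
          · norm_num at h
      · rw [Complex.mem_slitPlane_iff]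
        right
        rw [hbase0 i]
        have him : (2 * (π:ℂ) * Complex.I / ((hM.eigenvalues i : ℝ) : ℂ)).im
            = 2 * π / hM.eigenvalues i := by
          rw [Complex.div_ofReal_im]
          simp [Complex.mul_im]
        rw [him]
        exact div_ne_zero (by positivity) (hlam i)
    exact hgi
  -- sum of signs
  have hsum : ∑ i, Real.sign (hM.eigenvalues i)
      = ((((Finset.univ.filter fun i => 0 < hM.eigenvalues i).card : ℤ) -
          ((Finset.univ.filter fun i => hM.eigenvalues i < 0).card : ℤ) : ℤ) : ℝ) := by
    rw [← Finset.sum_filter_add_sum_filter_not Finset.univ (fun i => 0 < hM.eigenvalues i)]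
    have e1 : ∑ i ∈ Finset.univ.filter (fun i => 0 < hM.eigenvalues i),
        Real.sign (hM.eigenvalues i)
        = ((Finset.univ.filter fun i => 0 < hM.eigenvalues i).card : ℝ) := by
      rw [Finset.sum_congr rfl (fun i hi => Real.sign_of_pos (Finset.mem_filter.mp hi).2)]
      simp
    have hfilt : Finset.univ.filter (fun i => ¬ 0 < hM.eigenvalues i)
        = Finset.univ.filter (fun i => hM.eigenvalues i < 0) := by
      apply Finset.filter_congr
      intro i _
      simp only [not_lt, eq_iff_iff]
      constructor
      · intro h; exact lt_of_le_of_ne h (hlam i)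
      · exact le_of_lt
    have e2 : ∑ i ∈ Finset.univ.filter (fun i => ¬ 0 < hM.eigenvalues i),
        Real.sign (hM.eigenvalues i)
        = -((Finset.univ.filter fun i => hM.eigenvalues i < 0).card : ℝ) := by
      rw [hfilt, Finset.sum_congr rfl (fun i hi => Real.sign_of_neg (Finset.mem_filter.mp hi).2)]
      simp
    rw [e1, e2]
    push_cast
    ring
  -- value at 0
  have hval : (∏ i, ((π:ℂ) / ((((0:ℝ):ℂ) - Complex.I * (hM.eigenvalues i : ℝ))/2)) ^ ((1:ℂ)/2))
      = (((2 * π) ^ ((d : ℝ) / 2) * (Real.sqrt |M.det|)⁻¹ : ℝ) : ℂ) *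
        Complex.exp ((Complex.I * π / 4) *
          ((((Finset.univ.filter fun i => 0 < hM.eigenvalues i).card : ℤ) -
            ((Finset.univ.filter fun i => hM.eigenvalues i < 0).card : ℤ) : ℤ) : ℂ)) := by
    have h1 : (∏ i, ((π:ℂ) / ((((0:ℝ):ℂ) - Complex.I * (hM.eigenvalues i : ℝ))/2)) ^ ((1:ℂ)/2))
        = ∏ i, ((Real.sqrt (2*π/|hM.eigenvalues i|) : ℂ) *
            Complex.exp (Complex.I * π/4 * (Real.sign (hM.eigenvalues i)))) :=
      Finset.prod_congr rfl fun i _ => by rw [hbase0 i, fresnel_factor _ (hlam i)]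
    rw [h1, Finset.prod_mul_distrib]
    congr 1
    · rw [← Complex.ofReal_prod]
      congr 1
      have h2 : ∏ i, Real.sqrt (2*π/|hM.eigenvalues i|)
          = ((2*π)^d / |M.det|) ^ ((1:ℝ)/2) := by
        simp_rw [Real.sqrt_eq_rpow]
        rw [Real.finset_prod_rpow _ _ (fun i _ => div_nonneg (by positivity) (abs_nonneg _))]
        congr 1
        rw [Finset.prod_div_distrib, Finset.prod_const, Finset.card_univ, Fintype.card_fin,
          ← Finset.abs_prod, ← hdetprod]
      rw [h2, Real.div_rpow (by positivity) (abs_nonneg _),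
        show ((d:ℝ)/2) = (d:ℝ) * (1/2) by ring,
        Real.rpow_mul (by positivity), Real.rpow_natCast, Real.sqrt_eq_rpow, div_eq_mul_inv]
    · rw [← Complex.exp_sum]
      congr 1
      rw [← Finset.mul_sum, ← Complex.ofReal_sum, hsum]
      push_cast
      ring
  refine Tendsto.congr' ?_ ((hval ▸ hcont).mono_left nhdsWithin_le_nhds)
  filter_upwards [self_mem_nhdsWithin] with ε hε
  exact (key_integral M hM hε).symm
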